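/- Let μ and ν be probability measures on a measurable space X, let C ≥ 0, and let u : X → ℝ be measurable with c ≤ u ≤ M for some constants 0 < c ≤ M. Suppose that for every α > 1 one has (∫ u^{1/α} dμ)^α ≤ exp(C·α/(α−1)) · ∫ u dν. Then ∫ log u dμ ≤ log(∫ u dν) + C. -/

import Mathlib

open MeasureTheory Real

theorem log_harnack_from_harnack_family
    {X : Type*} [MeasurableSpace X] (μ ν : Measure X)
    [IsProbabilityMeasure μ] [IsProbabilityMeasure ν]
    (C : ℝ) (hC : 0 ≤ C) (u : X → ℝ) (hu : Measurable u)
    (c M : ℝ) (hc : 0 < c) (hcM : c ≤ M)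
    (hlb : ∀ x, c ≤ u x) (hub : ∀ x, u x ≤ M)
    (harnack : ∀ α : ℝ, 1 < α →
      (∫ x, (u x) ^ (1/α) ∂μ) ^ α ≤ Real.exp (C * α / (α - 1)) * ∫ x, u x ∂ν) :
    ∫ x, Real.log (u x) ∂μ ≤ Real.log (∫ x, u x ∂ν) + C := by
  have hupos : ∀ x, 0 < u x := fun x => lt_of_lt_of_le hc (hlb x)
  set J := ∫ x, u x ∂ν with hJ
  -- J ≥ c > 0
  have huνint : Integrable u ν := by
    refine Integrable.mono' (integrable_const M) hu.aestronglyMeasurable ?_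
    filter_upwards with x
    rw [Real.norm_eq_abs, abs_of_pos (hupos x)]; exact hub x
  have hJc : c ≤ J := by
    have := integral_mono (integrable_const c) huνint (fun x => hlb x)
    simpa using this
  have hJpos : 0 < J := lt_of_lt_of_le hc hJc
  -- integrability of log u
  have hlogint : Integrable (fun x => Real.log (u x)) μ := by
    refine Integrable.mono' (integrable_const (max |Real.log c| |Real.log M|))
      (hu.log).aestronglyMeasurable ?_
    filter_upwards with x
    rw [Real.norm_eq_abs]
    rcases le_or_gt (Real.log (u x)) 0 with h | h
    · rw [abs_of_nonpos h]
      refine le_trans ?_ (le_max_left _ _)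
      rcases le_or_gt (Real.log c) 0 with h' | h'
      · rw [abs_of_nonpos h']
        exact neg_le_neg (Real.log_le_log hc (hlb x))
      · have := Real.log_le_log hc (hlb x)
        linarith
    · rw [abs_of_pos h]
      refine le_trans ?_ (le_max_right _ _)
      refine le_trans (Real.log_le_log (hupos x) (hub x)) (le_abs_self _)
  -- main estimate for each α > 1
  have key : ∀ α : ℝ, 1 < α →
      ∫ x, Real.log (u x) ∂μ ≤ Real.log J + C * α / (α - 1) := by
    intro α hα
    have hαpos : 0 < α := lt_trans one_pos hα
    have hα1 : 0 < 1 / α := by positivity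
    set I := ∫ x, u x ^ (1/α) ∂μ with hI
    have hmeas : Measurable (fun x => u x ^ (1/α)) := by
      have : (fun x => u x ^ (1/α)) = fun x => Real.exp (Real.log (u x) * (1/α)) := by
        funext x; rw [Real.rpow_def_of_pos (hupos x)]
      rw [this]
      exact (hu.log.mul measurable_const).exp
    have hint : Integrable (fun x => u x ^ (1/α)) μ := by
      refine Integrable.mono' (integrable_const (M ^ (1/α))) hmeas.aestronglyMeasurable ?_
      filter_upwards with x
      rw [Real.norm_eq_abs, abs_of_pos (Real.rpow_pos_of_pos (hupos x) _)]
      exact Real.rpow_le_rpow (le_of_lt (hupos x)) (hub x) (le_of_lt hα1)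
    have hIc : c ^ (1/α) ≤ I := by
      have := integral_mono (integrable_const (c ^ (1/α))) hint
        (fun x => Real.rpow_le_rpow (le_of_lt hc) (hlb x) (le_of_lt hα1))
      simpa only [integral_const, measure_univ, probReal_univ, ENNReal.toReal_one, smul_eq_mul,
        one_mul] using this
    have hIpos : 0 < I := lt_of_lt_of_le (Real.rpow_pos_of_pos hc _) hIc
    -- Jensen: ∫ log (u ^ (1/α)) dμ ≤ log I
    have jensen : ∫ x, Real.log (u x ^ (1/α)) ∂μ ≤ Real.log I := by
      have hpt : ∀ x, Real.log (u x ^ (1/α)) ≤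
          Real.log I + (u x ^ (1/α) - I) / I := by
        intro x
        have htpos : 0 < u x ^ (1/α) := Real.rpow_pos_of_pos (hupos x) _
        have := Real.log_le_sub_one_of_pos (show 0 < u x ^ (1/α) / I by positivity)
        rw [Real.log_div (ne_of_gt htpos) (ne_of_gt hIpos)] at this
        have : Real.log (u x ^ (1/α)) ≤ Real.log I + (u x ^ (1/α) / I - 1) := by linarith
        rw [sub_div]
        rw [div_self (ne_of_gt hIpos)]
        linarith
      have hlint : Integrable (fun x => Real.log (u x ^ (1/α))) μ := by
        have : (fun x => Real.log (u x ^ (1/α))) =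
            fun x => (1/α) * Real.log (u x) := by
          funext x; rw [Real.log_rpow (hupos x)]
        rw [this]; exact hlogint.const_mul _
      have hdiv : Integrable (fun x => (u x ^ (1/α) - I) / I) μ :=
        (hint.sub (integrable_const I)).div_const I
      have hrint : Integrable (fun x => Real.log I + (u x ^ (1/α) - I) / I) μ :=
        (integrable_const _).add hdiv
      have := integral_mono hlint hrint hpt
      calc ∫ x, Real.log (u x ^ (1/α)) ∂μ
          ≤ ∫ x, (Real.log I + (u x ^ (1/α) - I) / I) ∂μ := this
        _ = Real.log I := by
            rw [integral_add (integrable_const _) hdiv]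
            rw [integral_div, integral_sub hint (integrable_const I)]
            simp only [integral_const, measure_univ, probReal_univ, ENNReal.toReal_one, smul_eq_mul,
              one_mul, ← hI, sub_self, zero_div, add_zero]
    -- so ∫ log u ≤ α * log I
    have step1 : ∫ x, Real.log (u x) ∂μ ≤ α * Real.log I := by
      have : ∫ x, Real.log (u x ^ (1/α)) ∂μ = (1/α) * ∫ x, Real.log (u x) ∂μ := by
        rw [← integral_const_mul]
        congr 1; funext x; rw [Real.log_rpow (hupos x)]
      rw [this] at jensen
      have h := mul_le_mul_of_nonneg_left jensen (le_of_lt hαpos)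
      have heq : α * (1/α * ∫ x, Real.log (u x) ∂μ) = ∫ x, Real.log (u x) ∂μ := by
        field_simp
      linarith
    -- take log of Harnack
    have h2 : α * Real.log I ≤ Real.log J + C * α / (α - 1) := by
      have hh := harnack α hα
      have hlog := Real.log_le_log (Real.rpow_pos_of_pos hIpos α) hh
      rw [Real.log_rpow hIpos, Real.log_mul (Real.exp_ne_zero _) (ne_of_gt hJpos),
        Real.log_exp] at hlog
      linarith
    linarith
  -- ε-argument: C * α / (α - 1) → C as α → ∞
  refine le_of_forall_pos_le_add ?_
  intro ε hε
  set α := 1 + C / ε + 1 with hαdef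
  have hα : 1 < α := by
    rw [hαdef]
    have : 0 ≤ C / ε := by positivity
    linarith
  have := key α hα
  have herr : C * α / (α - 1) ≤ C + ε := by
    have hα1 : (0:ℝ) < α - 1 := by linarith
    rw [div_le_iff₀ hα1]
    have : α - 1 = C / ε + 1 := by rw [hαdef]; ring
    rw [this]
    have hCe : C / ε * ε = C := div_mul_cancel₀ C (ne_of_gt hε)
    nlinarith [mul_pos hε (show (0:ℝ) < C/ε + 1 by positivity)]
  linarith
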